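/- For every finite simple graph G, B_2(G) = Σ_{v ∈ V} C(deg v, 3) − k_4(G) + k_{2,2}(G), where k_{2,2}(G) is the number of 4-element vertex subsets S such that the induced subgraph G[S] is isomorphic to the complete bipartite graph K_{2,2} (equivalently, to the 4-cycle C_4). -/

import Mathlib

open Finset
open SimpleGraph

/-- The `i`-th Betti number in the linear strand of the edge ideal of `G`:
`B_i(G) = Σ_{S ⊆ V, |S| = i+2} (#components of the complement of G[S] − 1)`. -/
noncomputable def linStrand {V : Type*} [Fintype V] [DecidableEq V]
    (G : SimpleGraph V) (i : ℕ) : ℕ :=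
  ∑ S ∈ (Finset.univ : Finset V).powersetCard (i + 2),
    (Nat.card ((G.induce (S : Set V))ᶜ.ConnectedComponent) - 1)

/-- The number of `m`-element vertex subsets `S` of `G` whose induced subgraph
is isomorphic to the graph `H`. -/
noncomputable def numIndIso {V W : Type*} [Fintype V] [DecidableEq V]
    (G : SimpleGraph V) (m : ℕ) (H : SimpleGraph W) : ℕ :=
  {S : Finset V | S.card = m ∧ Nonempty (G.induce (S : Set V) ≃g H)}.ncard

def adjB (f : Fin 6 → Bool) (i j : Fin 4) : Bool :=
  match i.val, j.val with
  | 0,1 => f 0 | 1,0 => f 0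
  | 0,2 => f 1 | 2,0 => f 1
  | 0,3 => f 2 | 3,0 => f 2
  | 1,2 => f 3 | 2,1 => f 3
  | 1,3 => f 4 | 3,1 => f 4
  | 2,3 => f 5 | 3,2 => f 5
  | _,_ => false

def gB (f : Fin 6 → Bool) : SimpleGraph (Fin 4) where
  Adj i j := adjB f i j = true
  symm := ⟨fun i j => by fin_cases i <;> fin_cases j <;> simp [adjB]⟩
  loopless := ⟨fun i => by fin_cases i <;> simp [adjB]⟩

instance (f : Fin 6 → Bool) : DecidableRel (gB f).Adj :=
  fun _ _ => inferInstanceAs (Decidable (_ = true))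

instance : DecidableRel (completeBipartiteGraph (Fin 2) (Fin 2)).Adj :=
  fun _ _ => inferInstanceAs (Decidable (_ ∨ _))

lemma gB_adj (f : Fin 6 → Bool) (i j : Fin 4) : (gB f).Adj i j ↔ adjB f i j = true := Iff.rfl

/-- complement iso -/
def isoCompl {α β : Type*} {G : SimpleGraph α} {H : SimpleGraph β} (φ : G ≃g H) : Gᶜ ≃g Hᶜ where
  toEquiv := φ.toEquiv
  map_rel_iff' := by
    intro a b
    simp [compl_adj, φ.map_rel_iff]

lemma iso_degree {α β : Type*} [Fintype α] [Fintype β] {G : SimpleGraph α} {H : SimpleGraph β}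
    [DecidableRel G.Adj] [DecidableRel H.Adj] (φ : G ≃g H) (v : α) :
    H.degree (φ v) = G.degree v := by
  rw [← card_neighborSet_eq_degree, ← card_neighborSet_eq_degree]
  exact Fintype.card_congr (φ.mapNeighborSet v).symm

def c4f : Fin 6 → Bool := ![false, true, true, true, true, false]

lemma c4_adj : ∀ a b : Fin 4,
    (completeBipartiteGraph (Fin 2) (Fin 2)).Adj ((finSumFinEquiv (m := 2) (n := 2)).symm a) ((finSumFinEquiv (m := 2) (n := 2)).symm b)
      ↔ (gB c4f).Adj a b := by decide

def isoC4K22 : gB c4f ≃g completeBipartiteGraph (Fin 2) (Fin 2) where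
  toEquiv := (finSumFinEquiv (m := 2) (n := 2)).symm
  map_rel_iff' := by intro a b; exact c4_adj a b

set_option maxRecDepth 10000 in
theorem key : ∀ f : Fin 6 → Bool,
    Fintype.card ((gB f)ᶜ.ConnectedComponent) - 1
      + (if ∀ v, (gB f).degree v = 3 then 1 else 0)
    = (univ.filter (fun v => (gB f).degree v = 3)).card
      + (if ∀ v, (gB f).degree v = 2 then 1 else 0) := by decide

set_option maxRecDepth 10000 in
theorem c4exists : ∀ f : Fin 6 → Bool, (∀ v, (gB f).degree v = 2) →
    ∃ σ : Equiv.Perm (Fin 4), ∀ i j, (gB f).Adj (σ i) (σ j) ↔ (gB c4f).Adj i j := by decide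

lemma k22_degree : ∀ w : Fin 2 ⊕ Fin 2, (completeBipartiteGraph (Fin 2) (Fin 2)).degree w = 2 := by
  decide

open scoped Classical

lemma top_iff_deg3 {α : Type*} [Fintype α] [DecidableEq α] (H : SimpleGraph α)
    [DecidableRel H.Adj] (h4 : Fintype.card α = 4) :
    H = ⊤ ↔ ∀ v, H.degree v = 3 := by
  constructor
  · intro h v
    have hnb : H.neighborFinset v = univ.erase v := by
      ext w
      simp only [mem_neighborFinset, mem_erase, mem_univ, and_true]
      constructor
      · exact fun hw => (H.ne_of_adj hw).symm
      · intro hw; rw [h]; exact fun he => hw (by simpa using he.symm)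
    rw [degree, hnb, card_erase_of_mem (mem_univ v), card_univ, h4]
  · intro h
    have hsub : ∀ v, H.neighborFinset v ⊆ univ.erase v := by
      intro v w hw
      rw [mem_neighborFinset] at hw
      exact mem_erase.mpr ⟨(H.ne_of_adj hw).symm, mem_univ w⟩
    have heq : ∀ v, H.neighborFinset v = univ.erase v := by
      intro v
      apply Finset.eq_of_subset_of_card_le (hsub v)
      rw [card_erase_of_mem (mem_univ v), card_univ, h4]
      have := h v
      rw [degree] at this
      omega
    ext v w
    simp only [top_adj]
    constructor
    · exact fun hw => H.ne_of_adj hw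
    · intro hvw
      have : w ∈ H.neighborFinset v := by
        rw [heq v]; exact mem_erase.mpr ⟨Ne.symm hvw, mem_univ w⟩
      rwa [mem_neighborFinset] at this

lemma perS {α : Type*} [Fintype α] [DecidableEq α] (H : SimpleGraph α)
    [DecidableRel H.Adj] (h4 : Fintype.card α = 4) :
    (Nat.card Hᶜ.ConnectedComponent : ℤ) - 1 =
      ((univ.filter (fun v => H.degree v = 3)).card : ℤ)
      - (if H = ⊤ then 1 else 0)
      + (if Nonempty (H ≃g completeBipartiteGraph (Fin 2) (Fin 2)) then 1 else 0) := by
  have e : α ≃ Fin 4 := Fintype.equivFinOfCardEq h4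
  set d : α → α → Bool := fun x y => decide (H.Adj x y) with hd
  set f : Fin 6 → Bool := fun k =>
    if k = 0 then d (e.symm 0) (e.symm 1)
    else if k = 1 then d (e.symm 0) (e.symm 2)
    else if k = 2 then d (e.symm 0) (e.symm 3)
    else if k = 3 then d (e.symm 1) (e.symm 2)
    else if k = 4 then d (e.symm 1) (e.symm 3)
    else d (e.symm 2) (e.symm 3) with hf
  have key_adj : ∀ i j : Fin 4, (gB f).Adj i j ↔ H.Adj (e.symm i) (e.symm j) := by
    intro i j
    fin_cases i <;> fin_cases j <;>
      simp [gB_adj, adjB, hf, hd, decide_eq_true_iff, Matrix.cons_val_succ, H.adj_comm] <;>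
      exact H.adj_comm _ _
  let φ : H ≃g gB f := { toEquiv := e, map_rel_iff' := by intro a b; rw [key_adj]; simp }
  have hdeg : ∀ w : Fin 4, (gB f).degree w = H.degree (e.symm w) := by
    intro w
    unfold SimpleGraph.degree
    apply Finset.card_bij (fun x _ => e.symm x)
    · intro x hx
      rw [mem_neighborFinset] at hx ⊢
      exact (key_adj w x).mp hx
    · intro a _ b _ h
      simpa using congrArg e h
    · intro y hy
      refine ⟨e y, ?_, by simp⟩
      rw [mem_neighborFinset] at hy ⊢
      rw [key_adj]
      simpa using hy
  have hAll : ∀ n : ℕ, (∀ v, H.degree v = n) ↔ (∀ w, (gB f).degree w = n) := by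
    intro n
    constructor
    · intro h w; rw [hdeg]; exact h _
    · intro h v
      have := h (e v)
      rw [hdeg, e.symm_apply_apply] at this
      exact this
  have hcc : Nat.card Hᶜ.ConnectedComponent = Fintype.card ((gB f)ᶜ.ConnectedComponent) := by
    rw [Nat.card_eq_fintype_card]
    exact Fintype.card_congr (isoCompl φ).connectedComponentEquiv
  have hfilter : (univ.filter (fun v => H.degree v = 3)).card
      = (univ.filter (fun w => (gB f).degree w = 3)).card := by
    apply Finset.card_bij (fun v _ => e v)
    · intro a ha
      simp only [mem_filter, mem_univ, true_and] at ha ⊢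
      rw [hdeg, e.symm_apply_apply]; exact ha
    · intro a _ b _ h; exact e.injective h
    · intro w hw
      simp only [mem_filter, mem_univ, true_and] at hw
      refine ⟨e.symm w, ?_, by simp⟩
      simp only [mem_filter, mem_univ, true_and]
      rw [← hdeg]; exact hw
  have hK : Nonempty (H ≃g completeBipartiteGraph (Fin 2) (Fin 2))
      ↔ (∀ w, (gB f).degree w = 2) := by
    constructor
    · rintro ⟨ψ⟩ w
      have hiso : gB f ≃g completeBipartiteGraph (Fin 2) (Fin 2) := φ.symm.trans ψ
      calc (gB f).degree w = _ := (iso_degree hiso w).symm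
        _ = 2 := k22_degree _
    · intro h
      obtain ⟨σ, hσ⟩ := c4exists f h
      have iso1 : gB c4f ≃g gB f := { toEquiv := σ, map_rel_iff' := by intro a b; exact hσ a b }
      exact ⟨φ.trans (iso1.symm.trans isoC4K22)⟩
  have e1 : (if H = ⊤ then (1:ℤ) else 0) = (if ∀ w, (gB f).degree w = 3 then 1 else 0) :=
    if_congr ((top_iff_deg3 H h4).trans (hAll 3)) rfl rfl
  have e2 : (if Nonempty (H ≃g completeBipartiteGraph (Fin 2) (Fin 2)) then (1:ℤ) else 0)
      = (if ∀ w, (gB f).degree w = 2 then 1 else 0) := if_congr hK rfl rfl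
  rw [hcc, hfilter, e1, e2]
  have hk := key f
  haveI : Nonempty ((gB f)ᶜ.ConnectedComponent) := ⟨(gB f)ᶜ.connectedComponentMk 0⟩
  have hpos : 0 < Fintype.card ((gB f)ᶜ.ConnectedComponent) := Fintype.card_pos
  split_ifs at hk ⊢ <;> omega

section Main

variable {V : Type*} [Fintype V] [DecidableEq V] (G : SimpleGraph V) [DecidableRel G.Adj]

lemma card_coe_set (S : Finset V) (hS : S.card = 4) :
    Fintype.card ↥(S : Set V) = 4 := by
  rw [← Set.toFinset_card, Finset.toFinset_coe]
  exact hS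

lemma deg_induce (S : Finset V) (v : ↥(S : Set V)) :
    (G.induce (S : Set V)).degree v = (S.filter (fun w => G.Adj ↑v w)).card := by
  unfold SimpleGraph.degree
  refine Finset.card_bij (fun x _ => (x : V)) ?_ ?_ ?_
  · intro x hx
    rw [mem_neighborFinset] at hx
    exact mem_filter.mpr ⟨by simpa using x.2, hx⟩
  · intro a _ b _ h
    exact Subtype.ext h
  · intro w hw
    rw [mem_filter] at hw
    exact ⟨⟨w, by simpa using hw.1⟩, by rw [mem_neighborFinset]; exact hw.2, rfl⟩

lemma deg3_iff (S : Finset V) (hS : S.card = 4) (v : ↥(S : Set V)) :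
    (G.induce (S : Set V)).degree v = 3 ↔ S.erase ↑v ⊆ G.neighborFinset ↑v := by
  rw [deg_induce]
  have hv : (v : V) ∈ S := by simpa using v.2
  have hsub : S.filter (fun w => G.Adj ↑v w) ⊆ S.erase ↑v := by
    intro w hw
    rw [mem_filter] at hw
    exact mem_erase.mpr ⟨(G.ne_of_adj hw.2).symm, hw.1⟩
  have hce : (S.erase ↑v).card = 3 := by
    rw [card_erase_of_mem hv, hS]
  constructor
  · intro h w hw
    have heq : S.filter (fun w => G.Adj ↑v w) = S.erase ↑v :=
      Finset.eq_of_subset_of_card_le hsub (by omega)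
    rw [← heq] at hw
    rw [mem_neighborFinset]
    exact (mem_filter.mp hw).2
  · intro h
    have hsub2 : S.erase ↑v ⊆ S.filter (fun w => G.Adj ↑v w) := by
      intro w hw
      refine mem_filter.mpr ⟨mem_of_mem_erase hw, ?_⟩
      have := h hw
      rwa [mem_neighborFinset] at this
    have : S.filter (fun w => G.Adj ↑v w) = S.erase ↑v :=
      Finset.Subset.antisymm hsub hsub2
    rw [this, hce]

lemma filter_deg3_card (S : Finset V) (hS : S.card = 4) :
    (univ.filter (fun v : ↥(S : Set V) => (G.induce (S : Set V)).degree v = 3)).card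
      = (S.filter (fun v => S.erase v ⊆ G.neighborFinset v)).card := by
  refine Finset.card_bij (fun v _ => (v : V)) ?_ ?_ ?_
  · intro a ha
    simp only [mem_filter, mem_univ, true_and] at ha
    rw [deg3_iff G S hS] at ha
    exact mem_filter.mpr ⟨by simpa using a.2, ha⟩
  · intro a _ b _ h
    exact Subtype.ext h
  · intro w hw
    rw [mem_filter] at hw
    refine ⟨⟨w, by simpa using hw.1⟩, ?_, rfl⟩
    simp only [mem_filter, mem_univ, true_and]
    rw [deg3_iff G S hS]
    exact hw.2

lemma double_count :
    ∑ S ∈ (univ : Finset V).powersetCard 4,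
      (S.filter (fun v => S.erase v ⊆ G.neighborFinset v)).card
    = ∑ v : V, (G.degree v).choose 3 := by
  have hrw : ∀ S : Finset V,
      (S.filter (fun v => S.erase v ⊆ G.neighborFinset v)).card
      = ∑ v : V, if v ∈ S ∧ S.erase v ⊆ G.neighborFinset v then 1 else 0 := by
    intro S
    have hfe : univ.filter (fun v => v ∈ S ∧ S.erase v ⊆ G.neighborFinset v)
        = S.filter (fun v => S.erase v ⊆ G.neighborFinset v) := by
      ext v
      simp
    rw [← hfe, Finset.card_filter]
  simp_rw [hrw]
  rw [Finset.sum_comm]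
  apply Finset.sum_congr rfl
  intro v _
  rw [← Finset.card_filter]
  have hb : ((univ.powersetCard 4).filter
      (fun S : Finset V => v ∈ S ∧ S.erase v ⊆ G.neighborFinset v)).card
      = ((G.neighborFinset v).powersetCard 3).card := by
    refine Finset.card_bij' (fun S _ => S.erase v) (fun T _ => insert v T) ?_ ?_ ?_ ?_
    · intro S hS
      rw [mem_filter, mem_powersetCard_univ] at hS
      exact mem_powersetCard.mpr ⟨hS.2.2, by rw [card_erase_of_mem hS.2.1, hS.1]⟩
    · intro T hT
      rw [mem_powersetCard] at hT
      have hvT : v ∉ T := fun h => G.notMem_neighborFinset_self v (hT.1 h)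
      rw [mem_filter, mem_powersetCard_univ]
      refine ⟨by rw [card_insert_of_notMem hvT, hT.2], mem_insert_self v T, ?_⟩
      rw [Finset.erase_insert hvT]
      exact hT.1
    · intro S hS
      rw [mem_filter] at hS
      exact Finset.insert_erase hS.2.1
    · intro T hT
      rw [mem_powersetCard] at hT
      exact Finset.erase_insert (fun h => G.notMem_neighborFinset_self v (hT.1 h))
  rw [hb, Finset.card_powersetCard, card_neighborFinset_eq_degree]

end Main


/-- For every finite simple graph `G`,
`B_2(G) = Σ_{v ∈ V} C(deg v, 3) − k_4(G) + k_{2,2}(G)`. -/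
theorem linStrand_two_eq
    {V : Type*} [Fintype V] [DecidableEq V] (G : SimpleGraph V) [DecidableRel G.Adj] :
    (linStrand G 2 : ℤ) =
      ∑ v : V, ((G.degree v).choose 3 : ℤ) - (G.cliqueFinset 4).card
        + numIndIso G 4 (completeBipartiteGraph (Fin 2) (Fin 2)) := by
  have step1 : (linStrand G 2 : ℤ)
      = ∑ S ∈ (univ : Finset V).powersetCard 4,
          ((Nat.card ((G.induce (S : Set V))ᶜ.ConnectedComponent) : ℤ) - 1) := by
    rw [linStrand, Nat.cast_sum]
    refine Finset.sum_congr (by norm_num) ?_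
    intro S hS
    have hS4 : S.card = 4 := mem_powersetCard_univ.mp hS
    obtain ⟨v, hv⟩ := Finset.card_pos.mp (by omega : 0 < S.card)
    haveI : Nonempty ((G.induce (S : Set V))ᶜ.ConnectedComponent) :=
      ⟨(G.induce (S : Set V))ᶜ.connectedComponentMk ⟨v, by simpa using hv⟩⟩
    have hpos : 0 < Nat.card ((G.induce (S : Set V))ᶜ.ConnectedComponent) := Nat.card_pos
    push_cast [Nat.cast_sub hpos]
    ring
  rw [step1]
  have step2 : ∀ S ∈ (univ : Finset V).powersetCard 4,
      ((Nat.card ((G.induce (S : Set V))ᶜ.ConnectedComponent) : ℤ) - 1)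
      = ((univ.filter (fun v : ↥(S : Set V) => (G.induce (S : Set V)).degree v = 3)).card : ℤ)
        - (if G.induce (S : Set V) = ⊤ then 1 else 0)
        + (if Nonempty (G.induce (S : Set V) ≃g completeBipartiteGraph (Fin 2) (Fin 2))
            then 1 else 0) := by
    intro S hS
    exact perS (G.induce (S : Set V)) (card_coe_set S (mem_powersetCard_univ.mp hS))
  rw [Finset.sum_congr rfl step2, Finset.sum_add_distrib, Finset.sum_sub_distrib]
  congr 1
  congr 1
  · rw [← Nat.cast_sum, ← Nat.cast_sum]
    congr 1
    rw [← double_count G]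
    exact Finset.sum_congr rfl fun S hS => filter_deg3_card G S (mem_powersetCard_univ.mp hS)
  · rw [Finset.sum_boole]
    have hcl : (univ.powersetCard 4).filter (fun S : Finset V => G.induce (S : Set V) = ⊤)
        = G.cliqueFinset 4 := by
      ext T
      simp only [mem_filter, mem_powersetCard_univ, mem_cliqueFinset_iff, isNClique_iff,
        isClique_iff_induce_eq]
      tauto
    rw [hcl]
  · rw [Finset.sum_boole, numIndIso]
    have hset : {S : Finset V | S.card = 4
        ∧ Nonempty (G.induce (S : Set V) ≃g completeBipartiteGraph (Fin 2) (Fin 2))}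
        = ↑((univ.powersetCard 4).filter
            (fun S : Finset V =>
              Nonempty (G.induce (↑S : Set V) ≃g completeBipartiteGraph (Fin 2) (Fin 2)))) := by
      ext S
      simp [mem_powersetCard_univ]
    rw [hset, Set.ncard_coe_finset]
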